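/- Let λ > 1 be a real number, let f : ℝⁿ × ℝᵐ → ℝⁿ, and let U ⊆ ℝᵐ be compact and nonempty. Suppose there exist a bounded function v : X̂ → ℝ and a feedback control function u : ℝⁿ → ℝᵐ with u(x) ∈ U for all x, such that: (i) v(f(x, u(x))) ≥ λ·v(x) for every x ∈ X\T, and (ii) v(x) ≤ 0 for every x ∈ X̂\X. Then the set {x ∈ X : v(x) > 0} is a controlled reach-avoid set; that is, for every x₀ ∈ X with v(x₀) > 0 there exist a control policy π and a time k ∈ ℕ such that φ^π_{x₀}(k) ∈ T and φ^π_{x₀}(t) ∈ X for all 0 ≤ t ≤ k. -/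

import Mathlib

open MeasureTheory Set

noncomputable section

/-- Trajectory of the discrete-time control system `x(t+1) = f(x(t), u(t))`. -/
def traj {n m : ℕ} (f : (Fin n → ℝ) → (Fin m → ℝ) → (Fin n → ℝ))
    (x0 : Fin n → ℝ) (π : ℕ → (Fin m → ℝ)) : ℕ → (Fin n → ℝ)
  | 0 => x0
  | t + 1 => f (traj f x0 π t) (π t)

/-- Corollary 1: a feedback-control Lyapunov-like condition yields a
controlled reach-avoid set. -/
theorem stmt_1 {n m : ℕ} (lam : ℝ) (hlam : 1 < lam)
    (f : (Fin n → ℝ) → (Fin m → ℝ) → (Fin n → ℝ))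
    (U : Set (Fin m → ℝ)) (hUc : IsCompact U) (hUne : U.Nonempty)
    (X T Xhat : Set (Fin n → ℝ))
    (hXo : IsOpen X) (hXb : Bornology.IsBounded X)
    (hTo : IsOpen T) (hTb : Bornology.IsBounded T) (hTX : T ⊆ X)
    (hXhat1 : ∀ x ∈ X, ∀ u ∈ U, f x u ∈ Xhat) (hXhat2 : X ⊆ Xhat)
    (v : (Fin n → ℝ) → ℝ)
    (hvb : ∃ M : ℝ, ∀ x ∈ Xhat, |v x| ≤ M)
    (u : (Fin n → ℝ) → (Fin m → ℝ)) (hu : ∀ x, u x ∈ U)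
    (h1 : ∀ x ∈ X \ T, lam * v x ≤ v (f x (u x)))
    (h2 : ∀ x ∈ Xhat \ X, v x ≤ 0) :
    ∀ x0 ∈ X, 0 < v x0 →
      ∃ π : ℕ → (Fin m → ℝ), (∀ t, π t ∈ U) ∧
        ∃ k : ℕ, traj f x0 π k ∈ T ∧ ∀ t ≤ k, traj f x0 π t ∈ X := by
  intro x0 hx0 hv0
  classical
  obtain ⟨M, hM⟩ := hvb
  -- closed-loop trajectory
  set g : ℕ → (Fin n → ℝ) := fun t => Nat.rec x0 (fun _ x => f x (u x)) t with hg
  have hg0 : g 0 = x0 := rfl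
  have hgs : ∀ t, g (t + 1) = f (g t) (u (g t)) := fun t => rfl
  set π : ℕ → (Fin m → ℝ) := fun t => u (g t) with hπ
  have htraj : ∀ t, traj f x0 π t = g t := by
    intro t
    induction t with
    | zero => rfl
    | succ t ih => exact (congrArg (fun y => f y (π t)) ih).trans (hgs t).symm
  have hlam0 : (0:ℝ) < lam := lt_trans one_pos hlam
  -- key invariant
  have key : ∀ t, (∀ s < t, g s ∉ T) → g t ∈ X ∧ lam ^ t * v x0 ≤ v (g t) := by
    intro t
    induction t with
    | zero => intro _; simpa [hg0] using hx0
    | succ t ih =>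
      intro h
      obtain ⟨hXt, hvt⟩ := ih (fun s hs => h s (hs.trans (Nat.lt_succ_self t)))
      have hnt : g t ∉ T := h t (Nat.lt_succ_self t)
      have hstep := h1 (g t) ⟨hXt, hnt⟩
      have hvpos : 0 < v (g t) :=
        lt_of_lt_of_le (by positivity) hvt
      have hv1 : lam ^ (t + 1) * v x0 ≤ v (g (t + 1)) := by
        rw [hgs]
        calc lam ^ (t + 1) * v x0 = lam * (lam ^ t * v x0) := by ring
          _ ≤ lam * v (g t) := by nlinarith
          _ ≤ v (f (g t) (u (g t))) := hstep
      have hXhat : g (t + 1) ∈ Xhat := by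
        rw [hgs]; exact hXhat1 (g t) hXt (u (g t)) (hu (g t))
      have hvpos1 : 0 < v (g (t + 1)) :=
        lt_of_lt_of_le (by positivity) hv1
      have : g (t + 1) ∈ X := by
        by_contra hnX
        exact absurd (h2 _ ⟨hXhat, hnX⟩) (not_le.mpr hvpos1)
      exact ⟨this, hv1⟩
  -- trajectory must hit T
  have hhit : ∃ t, g t ∈ T := by
    by_contra hno
    push_neg at hno
    obtain ⟨t, ht⟩ := pow_unbounded_of_one_lt (M / v x0) hlam
    obtain ⟨hXt, hvt⟩ := key t (fun s _ => hno s)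
    have hMb := hM (g t) (hXhat2 hXt)
    have : M < lam ^ t * v x0 := by
      rw [div_lt_iff₀ hv0] at ht; linarith
    have : M < v (g t) := lt_of_lt_of_le this hvt
    have := abs_le.mp hMb
    linarith [this.2]
  set k := Nat.find hhit with hk
  refine ⟨π, fun t => hu (g t), k, ?_, ?_⟩
  · rw [htraj]; exact Nat.find_spec hhit
  · intro t htk
    rw [htraj]
    exact (key t (fun s hs => Nat.find_min hhit (lt_of_lt_of_le hs htk))).1
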